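/- Suppose P = (P_k^{(j)})_{k≥0, 1≤j≤M} satisfies the Scheme-1 equilibrium recursion P_{k+1}^{(j)} − P_{k+2}^{(j)} = Δⱼ((P_k^{(j)})^{dⱼ} − (P_{k+1}^{(j)})^{dⱼ})·∏_{i<j}(P_k^{(i)})^{d_i}·∏_{i>j}(P_{k+1}^{(i)})^{d_i} for all k ≥ 0 and j, with P_0^{(j)} = 1, all P_k^{(j)} ∈ [0,1] nonincreasing in k, and P_k^{(j)} → 0 as k → ∞ for each j. Then for every l ≥ 0: ∑_{j=1}^M P_{l+1}^{(j)}/Δⱼ = ∏_{j=1}^M (P_l^{(j)})^{dⱼ}. -/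

import Mathlib

open Finset Filter

set_option maxHeartbeats 1000000 in
/-- From the Scheme-1 equilibrium recursion with vanishing tails one obtains
the coupling identity `∑ⱼ P_{l+1}^{(j)}/Δⱼ = ∏ⱼ (P_l^{(j)})^{dⱼ}`. -/
theorem coupling_identity_of_equilibrium
    (M : ℕ) (hM : 1 ≤ M)
    (Δ : Fin M → ℝ) (d : Fin M → ℕ) (P : Fin M → ℕ → ℝ)
    (hΔ : ∀ j, 0 < Δ j) (hd : ∀ j, 1 ≤ d j)
    (hP0 : ∀ j, P j 0 = 1)
    (hPmem : ∀ j k, P j k ∈ Set.Icc (0 : ℝ) 1)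
    (hPmono : ∀ j k, P j (k + 1) ≤ P j k)
    (hrec : ∀ (j : Fin M) (k : ℕ),
        P j (k + 1) - P j (k + 2) =
          Δ j * ((P j k) ^ (d j) - (P j (k + 1)) ^ (d j)) *
            (∏ i ∈ univ.filter (fun i => i < j), (P i k) ^ (d i)) *
            (∏ i ∈ univ.filter (fun i => j < i), (P i (k + 1)) ^ (d i)))
    (hlim : ∀ j, Tendsto (fun k => P j k) atTop (nhds 0)) :
    ∀ l : ℕ, ∑ j, P j (l + 1) / Δ j = ∏ j, (P j l) ^ (d j) := by
  set F : ℕ → ℝ := fun m => ∏ j, (P j m) ^ (d j) with hF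
  -- key one-step identity
  have key : ∀ k : ℕ, ∑ j, (P j (k + 1) - P j (k + 2)) / Δ j = F k - F (k + 1) := by
    intro k
    set g : ℕ → ℝ := fun n =>
      (∏ i ∈ univ.filter (fun i : Fin M => (i : ℕ) < n), (P i k) ^ (d i)) *
      ∏ i ∈ univ.filter (fun i : Fin M => ¬ (i : ℕ) < n), (P i (k + 1)) ^ (d i) with hg
    have hstep : ∀ j : Fin M,
        (P j (k + 1) - P j (k + 2)) / Δ j = g ((j : ℕ) + 1) - g (j : ℕ) := by
      intro j
      have h1 : univ.filter (fun i : Fin M => (i : ℕ) < (j : ℕ) + 1)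
          = insert j (univ.filter (fun i => i < j)) := by
        ext i
        simp only [mem_filter, mem_univ, true_and, mem_insert, Fin.lt_def, Fin.ext_iff]
        omega
      have h2 : univ.filter (fun i : Fin M => ¬ (i : ℕ) < (j : ℕ))
          = insert j (univ.filter (fun i => j < i)) := by
        ext i
        simp only [mem_filter, mem_univ, true_and, mem_insert, Fin.lt_def, Fin.ext_iff, not_lt]
        omega
      have h3 : univ.filter (fun i : Fin M => ¬ (i : ℕ) < (j : ℕ) + 1)
          = univ.filter (fun i : Fin M => j < i) := by
        ext i
        simp only [mem_filter, mem_univ, true_and, Fin.lt_def, not_lt]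
        omega
      have h4 : univ.filter (fun i : Fin M => (i : ℕ) < (j : ℕ))
          = univ.filter (fun i : Fin M => i < j) := by
        ext i
        simp only [mem_filter, mem_univ, true_and, Fin.lt_def]
      have hj1 : j ∉ univ.filter (fun i : Fin M => i < j) := by simp
      have hj2 : j ∉ univ.filter (fun i : Fin M => j < i) := by simp
      have hgj1 : g ((j : ℕ) + 1) =
          ((P j k) ^ (d j) * ∏ i ∈ univ.filter (fun i => i < j), (P i k) ^ (d i)) *
          ∏ i ∈ univ.filter (fun i => j < i), (P i (k + 1)) ^ (d i) := by
        simp only [hg]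
        rw [h1, h3, prod_insert hj1]
      have hgj2 : g (j : ℕ) =
          (∏ i ∈ univ.filter (fun i => i < j), (P i k) ^ (d i)) *
          ((P j (k + 1)) ^ (d j) * ∏ i ∈ univ.filter (fun i => j < i), (P i (k + 1)) ^ (d i)) := by
        simp only [hg]
        rw [h2, h4, prod_insert hj2]
      rw [hgj1, hgj2, hrec j k, div_eq_iff (hΔ j).ne']
      ring
    have hend : g M = F k := by
      have e1 : univ.filter (fun i : Fin M => (i : ℕ) < M) = univ := by
        ext i; simp [i.isLt]
      have e2 : univ.filter (fun i : Fin M => ¬ (i : ℕ) < M) = ∅ := by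
        ext i; simp [i.isLt]
      simp only [hg]
      rw [e1, e2, prod_empty, mul_one, hF]
    have hzero : g 0 = F (k + 1) := by
      have e1 : univ.filter (fun i : Fin M => (i : ℕ) < 0) = ∅ := by
        ext i; simp
      have e2 : univ.filter (fun i : Fin M => ¬ (i : ℕ) < 0) = univ := by
        ext i; simp
      simp only [hg]
      rw [e1, e2, prod_empty, one_mul, hF]
    calc ∑ j, (P j (k + 1) - P j (k + 2)) / Δ j
        = ∑ j : Fin M, (g ((j : ℕ) + 1) - g (j : ℕ)) := by
          exact sum_congr rfl fun j _ => hstep j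
      _ = ∑ i ∈ range M, (g (i + 1) - g i) := Fin.sum_univ_eq_sum_range (fun i => g (i + 1) - g i) M
      _ = g M - g 0 := Finset.sum_range_sub g M
      _ = F k - F (k + 1) := by rw [hend, hzero]
  -- telescoping over k ≥ l
  have tele : ∀ l n : ℕ, ∑ j, (P j (l + 1) - P j (l + 1 + n)) / Δ j = F l - F (l + n) := by
    intro l n
    induction n with
    | zero => simp
    | succ n ih =>
      have hsplit : ∀ j : Fin M,
          (P j (l + 1) - P j (l + 1 + (n + 1))) / Δ j =
          (P j (l + 1) - P j (l + 1 + n)) / Δ j +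
          (P j ((l + n) + 1) - P j ((l + n) + 2)) / Δ j := by
        intro j
        have e1 : l + 1 + (n + 1) = (l + n) + 2 := by ring
        have e2 : l + 1 + n = (l + n) + 1 := by ring
        rw [e1, e2, ← add_div]
        congr 1
        ring
      calc ∑ j, (P j (l + 1) - P j (l + 1 + (n + 1))) / Δ j
          = ∑ j, ((P j (l + 1) - P j (l + 1 + n)) / Δ j +
              (P j ((l + n) + 1) - P j ((l + n) + 2)) / Δ j) :=
            sum_congr rfl fun j _ => hsplit j
        _ = (∑ j, (P j (l + 1) - P j (l + 1 + n)) / Δ j) +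
            ∑ j, (P j ((l + n) + 1) - P j ((l + n) + 2)) / Δ j := sum_add_distrib
        _ = (F l - F (l + n)) + (F (l + n) - F ((l + n) + 1)) := by rw [ih, key (l + n)]
        _ = F l - F (l + (n + 1)) := by
            have : l + (n + 1) = (l + n) + 1 := by ring
            rw [this]; ring
  intro l
  have htop : Tendsto (fun n : ℕ => l + 1 + n) atTop atTop :=
    tendsto_atTop_mono (fun n => Nat.le_add_left n (l + 1)) tendsto_id
  have h1 : Tendsto (fun n => ∑ j, (P j (l + 1) - P j (l + 1 + n)) / Δ j) atTop
      (nhds (∑ j, (P j (l + 1) - 0) / Δ j)) := by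
    exact tendsto_finset_sum univ fun j _ =>
      (tendsto_const_nhds.sub ((hlim j).comp htop)).div_const (Δ j)
  have htop2 : Tendsto (fun n : ℕ => l + n) atTop atTop :=
    tendsto_atTop_mono (fun n => Nat.le_add_left n l) tendsto_id
  have hF0 : Tendsto (fun n => F (l + n)) atTop (nhds 0) := by
    have hz : (∏ j : Fin M, (0 : ℝ) ^ (d j)) = 0 :=
      Finset.prod_eq_zero (mem_univ (⟨0, hM⟩ : Fin M))
        (zero_pow (Nat.one_le_iff_ne_zero.mp (hd _)))
    rw [← hz]
    exact tendsto_finset_prod _ fun j _ => (((hlim j).comp htop2).pow (d j))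
  have h2 : Tendsto (fun n => ∑ j, (P j (l + 1) - P j (l + 1 + n)) / Δ j) atTop
      (nhds (F l - 0)) := by
    have := (tendsto_const_nhds (x := F l)).sub hF0
    exact this.congr fun n => (tele l n).symm
  have := tendsto_nhds_unique h1 h2
  simpa using this
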